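/- arXiv:2405.13054 — 2 statements merged into one kernel-verified Lean document; each statement's English description precedes it below -/
import Mathlib

section
/- Let P, Q be integers with Lucas sequences U, V and discriminant D = P² − 4Q. Then for every natural number n, U(3n) = 3·Q^n·U(n) + D·U(n)³. -/
def lucasU (P Q : ℤ) : ℕ → ℤ
  | 0 => 0
  | 1 => 1
  | n + 2 => P * lucasU P Q (n + 1) - Q * lucasU P Q n

def lucasV (P Q : ℤ) : ℕ → ℤ
  | 0 => 2
  | 1 => P
  | n + 2 => P * lucasV P Q (n + 1) - Q * lucasV P Q n

lemma lucasU_rec (P Q : ℤ) (k : ℕ) :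
    lucasU P Q (k + 2) = P * lucasU P Q (k + 1) - Q * lucasU P Q k := rfl

lemma lucasU_add (P Q : ℤ) (m n : ℕ) :
    lucasU P Q (m + n + 1) =
      lucasU P Q (m + 1) * lucasU P Q (n + 1) - Q * lucasU P Q m * lucasU P Q n := by
  induction m using Nat.twoStepInduction with
  | zero => simp [lucasU]
  | one =>
    rw [show (1 : ℕ) + n + 1 = n + 2 by ring, lucasU_rec, lucasU_rec]
    simp [lucasU]
  | more m ih1 ih2 =>
    rw [show m + 2 + n + 1 = (m + n + 1) + 2 by ring, lucasU_rec,
      show m + n + 1 + 1 = m + 1 + n + 1 by ring, ih1, ih2,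
      show m + 1 + 1 = m + 2 from rfl,
      show m + 2 + 1 = (m + 1) + 2 from rfl, lucasU_rec P Q (m + 1),
      show m + 1 + 1 = m + 2 from rfl, lucasU_rec P Q m]
    ring

lemma lucasU_norm (P Q : ℤ) (n : ℕ) :
    lucasU P Q (n + 1) ^ 2 - P * lucasU P Q (n + 1) * lucasU P Q n
      + Q * lucasU P Q n ^ 2 = Q ^ n := by
  induction n with
  | zero => simp [lucasU]
  | succ n ih =>
    show (P * lucasU P Q (n + 1) - Q * lucasU P Q n) ^ 2
        - P * (P * lucasU P Q (n + 1) - Q * lucasU P Q n) * lucasU P Q (n + 1)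
        + Q * lucasU P Q (n + 1) ^ 2 = Q ^ (n + 1)
    linear_combination Q * ih

theorem stmt12 (P Q : ℤ) (n : ℕ) :
    lucasU P Q (3 * n) = 3 * Q ^ n * lucasU P Q n + (P ^ 2 - 4 * Q) * lucasU P Q n ^ 3 := by
  cases n with
  | zero => simp [lucasU]
  | succ k =>
    have h1 := lucasU_add P Q (2 * k + 1) (k + 1)
    have h2 := lucasU_add P Q (k + 1) k
    have h3 := lucasU_add P Q k k
    have h4 := lucasU_norm P Q k
    have e1 : 2 * k + 1 + (k + 1) + 1 = 3 * (k + 1) := by ring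
    have e2 : k + 1 + k + 1 = 2 * k + 1 + 1 := by ring
    have e3 : k + k + 1 = 2 * k + 1 := by ring
    rw [e1] at h1
    rw [e2] at h2
    rw [e3] at h3
    have hdef : lucasU P Q (k + 2) = P * lucasU P Q (k + 1) - Q * lucasU P Q k := rfl
    rw [h1, h2, h3, hdef]
    rw [show (k + 1 : ℕ) = k + 1 from rfl, pow_succ]
    linear_combination 3 * Q * lucasU P Q (k + 1) * h4
end

section
/- Let P, Q be integers with Lucas sequence U of the first kind. For all natural numbers a, b, c, d, r with a + d = b + c, the quantity Q^{-r}·(U(a+r)·U(d+r) − U(b+r)·U(c+r)) is independent of r; equivalently, U(a+r)·U(d+r) − U(b+r)·U(c+r) = Q^r·(U(a)·U(d) − U(b)·U(c)). -/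
lemma lucasU_key (P Q : ℤ) : ∀ n m : ℕ,
    lucasU P Q (m + 1) * lucasU P Q (n + 1) - Q * (lucasU P Q m * lucasU P Q n) =
      lucasU P Q (m + n + 1)
  | 0, m => by simp [lucasU]
  | 1, m => by
      show lucasU P Q (m+1) * lucasU P Q 2 - Q * (lucasU P Q m * 1) = lucasU P Q (m+2)
      show lucasU P Q (m+1) * (P * lucasU P Q 1 - Q * lucasU P Q 0) - _ =
        P * lucasU P Q (m+1) - Q * lucasU P Q m
      simp [lucasU]; ring
  | n + 2, m => by
      have h1 := lucasU_key P Q n m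
      have h2 := lucasU_key P Q (n + 1) m
      have e1 : lucasU P Q (n + 3) = P * lucasU P Q (n + 2) - Q * lucasU P Q (n + 1) := rfl
      have e2 : lucasU P Q (m + n + 3) = P * lucasU P Q (m + n + 2) - Q * lucasU P Q (m + n + 1) := rfl
      have : m + (n + 2) + 1 = m + n + 3 := by ring
      have e0 : lucasU P Q (n + 2) = P * lucasU P Q (n + 1) - Q * lucasU P Q n := rfl
      rw [this, e2, e1, e0]
      rw [e0] at h2
      have : m + (n + 1) + 1 = m + n + 2 := by ring
      rw [this] at h2
      linear_combination P * h2 - Q * h1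

theorem stmt18 (P Q : ℤ) (a b c d r : ℕ) (h : a + d = b + c) :
    lucasU P Q (a + r) * lucasU P Q (d + r) - lucasU P Q (b + r) * lucasU P Q (c + r) =
      Q ^ r * (lucasU P Q a * lucasU P Q d - lucasU P Q b * lucasU P Q c) := by
  induction r with
  | zero => simp
  | succ r ih =>
      have ha := lucasU_key P Q (d + r) (a + r)
      have hb := lucasU_key P Q (c + r) (b + r)
      have hsum : a + r + (d + r) + 1 = b + r + (c + r) + 1 := by omega
      rw [hsum] at ha
      have e1 : a + (r + 1) = (a + r) + 1 := by ring
      have e2 : d + (r + 1) = (d + r) + 1 := by ring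
      have e3 : b + (r + 1) = (b + r) + 1 := by ring
      have e4 : c + (r + 1) = (c + r) + 1 := by ring
      rw [e1, e2, e3, e4]
      have : lucasU P Q (a + r + 1) * lucasU P Q (d + r + 1) -
          lucasU P Q (b + r + 1) * lucasU P Q (c + r + 1) =
          Q * (lucasU P Q (a + r) * lucasU P Q (d + r) -
            lucasU P Q (b + r) * lucasU P Q (c + r)) := by
        linear_combination ha - hb
      rw [this, ih]; ring
end
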